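/- arXiv:2306.08589 — 4 statements merged into one kernel-verified Lean document; each statement's English description precedes it below -/
import Mathlib

section
/- Let η be a chain of torsion classes in an abelian category A with torsionfree classes F_i = T_i^⊥. Then the function Ω_η : Obj*(A) → [0,1], M ↦ inf{ i ∈ [0,1] : M ∈ F_i }, is a weak stability condition on A. -/
open CategoryTheory CategoryTheory.Limits

universe v u

variable {C : Type u} [Category.{v} C] [Abelian C]

/-- The right Hom-orthogonal of a class of objects. -/
def Perp (T : Set C) : Set C := {Y | ∀ X ∈ T, ∀ f : X ⟶ Y, f = 0}

/-- `(T, F)` is a torsion pair: no nonzero maps from `T` to `F`, and every object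
admits a short exact sequence `0 → tX → X → fX → 0` with `tX ∈ T`, `fX ∈ F`. -/
def IsTorsionPair (T F : Set C) : Prop :=
  (∀ X ∈ T, ∀ Y ∈ F, ∀ f : X ⟶ Y, f = 0) ∧
  ∀ X : C, ∃ (A B : C) (f : A ⟶ X) (g : X ⟶ B) (w : f ≫ g = 0),
    A ∈ T ∧ B ∈ F ∧ (ShortComplex.mk f g w).ShortExact

/-- `T` is a torsion class if `(T, T^⊥)` is a torsion pair. -/
def IsTorsionClass (T : Set C) : Prop := IsTorsionPair T (Perp T)

/-- The defining condition of a weak stability condition: for every short exact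
sequence of nonzero objects, `φ(L) ≤ φ(M) ≤ φ(N)` or `φ(L) ≥ φ(M) ≥ φ(N)`. -/
def SeesawWeak (φ : C → ℝ) : Prop :=
  ∀ S : ShortComplex C, S.ShortExact →
    ¬ IsZero S.X₁ → ¬ IsZero S.X₂ → ¬ IsZero S.X₃ →
    (φ S.X₁ ≤ φ S.X₂ ∧ φ S.X₂ ≤ φ S.X₃) ∨ (φ S.X₃ ≤ φ S.X₂ ∧ φ S.X₂ ≤ φ S.X₁)

/-- A weak stability condition: valued in `[0,1]` on nonzero objects, constant on
isomorphism classes, and satisfying the weak see-saw condition. -/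
def IsWeakStability (φ : C → ℝ) : Prop :=
  (∀ X : C, ¬ IsZero X → φ X ∈ Set.Icc (0:ℝ) 1) ∧
  (∀ X Y : C, (X ≅ Y) → φ X = φ Y) ∧ SeesawWeak φ

/-- `T_{≥p}`: objects all of whose nonzero quotients `N` satisfy `φ(N) ≥ p`, together with `0`. -/
def Tge (φ : C → ℝ) (p : ℝ) : Set C :=
  {M | IsZero M ∨ ∀ (N : C) (g : M ⟶ N), Epi g → ¬ IsZero N → p ≤ φ N}

/-- `T_{>p}`: objects all of whose nonzero quotients `N` satisfy `φ(N) > p`, together with `0`. -/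
def Tgt (φ : C → ℝ) (p : ℝ) : Set C :=
  {M | IsZero M ∨ ∀ (N : C) (g : M ⟶ N), Epi g → ¬ IsZero N → p < φ N}

/-- `F_{<p}`: objects all of whose nonzero subobjects `L` satisfy `φ(L) < p`, together with `0`. -/
def Flt (φ : C → ℝ) (p : ℝ) : Set C :=
  {M | IsZero M ∨ ∀ (L : C) (f : L ⟶ M), Mono f → ¬ IsZero L → φ L < p}

/-- `F_{≤p}`: objects all of whose nonzero subobjects `L` satisfy `φ(L) ≤ p`, together with `0`. -/
def Fle (φ : C → ℝ) (p : ℝ) : Set C :=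
  {M | IsZero M ∨ ∀ (L : C) (f : L ⟶ M), Mono f → ¬ IsZero L → φ L ≤ p}

/-- `φ` is quasi-Noetherian: every strictly increasing chain of subobjects
`A₀ ⊂ A₁ ⊂ ⋯ ⊂ X` has some `n` with `φ(Aₙ) > φ(A_{n+1}/Aₙ)`. -/
def QuasiNoetherianStab (φ : C → ℝ) : Prop :=
  ∀ (X : C) (A : ℕ → Subobject X) (hA : StrictMono A),
    ∃ n : ℕ,
      φ (cokernel (Subobject.ofLE (A n) (A (n+1)) (hA (Nat.lt_succ_self n)).le)) < φ ((A n : C))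

/-- `φ` is weakly-Artinian: every strictly decreasing chain of subobjects
`X = A₀ ⊃ A₁ ⊃ ⋯` has some `n` with `φ(A_{n+1}) < φ(Aₙ/A_{n+1})`. -/
def WeaklyArtinianStab (φ : C → ℝ) : Prop :=
  ∀ (X : C) (A : ℕ → Subobject X) (hA : StrictAnti A),
    ∃ n : ℕ,
      φ ((A (n+1) : C)) < φ (cokernel (Subobject.ofLE (A (n+1)) (A n) (hA (Nat.lt_succ_self n)).le))

/-- A chain of torsion classes indexed by `[0,1]`: an order-reversing family of
torsion classes with `T 0 = A` and `T 1 = {0}`, together with the (unique)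
torsion subobject `t i M` of each object `M` with respect to `T i`. -/
structure TorsChain (C : Type u) [Category.{v} C] [Abelian C] where
  T : ℝ → Set C
  torsion : ∀ i ∈ Set.Icc (0:ℝ) 1, IsTorsionClass (T i)
  zero_eq : T 0 = Set.univ
  one_eq : T 1 = {X : C | IsZero X}
  antitone : ∀ ⦃r s : ℝ⦄, 0 ≤ r → r ≤ s → s ≤ 1 → T s ⊆ T r
  t : ℝ → ∀ M : C, Subobject M
  t_mem : ∀ i ∈ Set.Icc (0:ℝ) 1, ∀ M : C, ((t i M : C)) ∈ T i
  t_quot : ∀ i ∈ Set.Icc (0:ℝ) 1, ∀ M : C, cokernel (t i M).arrow ∈ Perp (T i)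

/-- `℧(M) = sup { i ∈ [0,1] ∣ M ∈ T i }`. -/
noncomputable def mho (T : ℝ → Set C) (M : C) : ℝ :=
  sSup {i : ℝ | i ∈ Set.Icc (0:ℝ) 1 ∧ M ∈ T i}

/-- `Ω(M) = inf { i ∈ [0,1] ∣ M ∈ (T i)^⊥ }`. -/
noncomputable def omg (T : ℝ → Set C) (M : C) : ℝ :=
  sInf {i : ℝ | i ∈ Set.Icc (0:ℝ) 1 ∧ M ∈ Perp (T i)}

/-- A chain of torsion classes is quasi-Noetherian if in every interval `(a,b)` the
chains of torsion subobjects stabilise to the right. -/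
def TorsChain.QuasiNoetherian (η : TorsChain C) : Prop :=
  ∀ a b : ℝ, 0 ≤ a → a < b → b ≤ 1 →
    ∃ s ∈ Set.Ioo a b, ∀ r ∈ Set.Ioo a b, ∀ M : C, η.t r M ≤ η.t s M

/-- A chain of torsion classes is weakly-Artinian if in every interval `(a,b)` the
chains of torsion subobjects stabilise to the left. -/
def TorsChain.WeaklyArtinian (η : TorsChain C) : Prop :=
  ∀ a b : ℝ, 0 ≤ a → a < b → b ≤ 1 →
    ∃ s ∈ Set.Ioo a b, ∀ r ∈ Set.Ioo a b, ∀ M : C, η.t s M ≤ η.t r M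


section OmgProof

variable (η : TorsChain C)

/-- The defining set of `omg`. -/
def omgSet (η : TorsChain C) (M : C) : Set ℝ :=
  {i : ℝ | i ∈ Set.Icc (0:ℝ) 1 ∧ M ∈ Perp (η.T i)}

lemma one_mem_omgSet (M : C) : (1:ℝ) ∈ omgSet η M := by
  refine ⟨⟨zero_le_one, le_refl 1⟩, ?_⟩
  intro X hX f
  rw [η.one_eq] at hX
  exact hX.eq_of_src f 0

lemma omgSet_nonempty (M : C) : (omgSet η M).Nonempty := ⟨1, one_mem_omgSet η M⟩

lemma omgSet_bddBelow (M : C) : BddBelow (omgSet η M) :=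
  ⟨0, fun i hi => hi.1.1⟩

lemma omg_eq (M : C) : omg η.T M = sInf (omgSet η M) := rfl

lemma omg_mem_Icc (M : C) : omg η.T M ∈ Set.Icc (0:ℝ) 1 := by
  constructor
  · exact le_csInf (omgSet_nonempty η M) (fun i hi => hi.1.1)
  · exact csInf_le (omgSet_bddBelow η M) (one_mem_omgSet η M)

lemma omgSet_upward {M : C} {i j : ℝ} (hi : i ∈ omgSet η M) (hij : i ≤ j)
    (hj1 : j ≤ 1) : j ∈ omgSet η M := by
  obtain ⟨⟨hi0, _⟩, hM⟩ := hi
  refine ⟨⟨hi0.trans hij, hj1⟩, ?_⟩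
  intro X hX f
  exact hM X (η.antitone hi0 hij hj1 hX) f

lemma mem_omgSet_of_lt {M : C} {j : ℝ} (hlt : omg η.T M < j) (hj1 : j ≤ 1) :
    j ∈ omgSet η M := by
  obtain ⟨i, hi, hij⟩ := exists_lt_of_csInf_lt (omgSet_nonempty η M) hlt
  exact omgSet_upward η hi hij.le hj1

lemma iso_mem_perp {X Y : C} (e : X ≅ Y) {T : Set C} (hY : Y ∈ Perp T) :
    X ∈ Perp T := by
  intro A hA f
  have : (f ≫ e.hom) = 0 := hY A hA (f ≫ e.hom)
  have h2 : f ≫ e.hom = 0 ≫ e.hom := by simpa using this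
  exact (cancel_mono e.hom).1 h2

lemma omg_iso (X Y : C) (e : X ≅ Y) : omg η.T X = omg η.T Y := by
  have h : ∀ (A B : C), (A ≅ B) → omgSet η B ⊆ omgSet η A := by
    intro A B f i hi
    exact ⟨hi.1, iso_mem_perp f hi.2⟩
  have h1 := h X Y e
  have h2 := h Y X e.symm
  exact le_antisymm
    (csInf_le_csInf (omgSet_bddBelow η X) (omgSet_nonempty η Y) h1)
    (csInf_le_csInf (omgSet_bddBelow η Y) (omgSet_nonempty η X) h2)

lemma sub_mem_perp {L M : C} (f : L ⟶ M) [Mono f] {T : Set C}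
    (hM : M ∈ Perp T) : L ∈ Perp T := by
  intro A hA g
  have : g ≫ f = 0 := hM A hA (g ≫ f)
  rw [← cancel_mono f, zero_comp]
  exact this

lemma ext_mem_perp (S : ShortComplex C) (hS : S.ShortExact) {T : Set C}
    (hL : S.X₁ ∈ Perp T) (hN : S.X₃ ∈ Perp T) : S.X₂ ∈ Perp T := by
  intro A hA f
  have hfg : f ≫ S.g = 0 := hN A hA (f ≫ S.g)
  have : Mono S.f := hS.mono_f
  have hl : hS.exact.lift f hfg ≫ S.f = f := hS.exact.lift_f f hfg
  rw [← hl, hL A hA (hS.exact.lift f hfg), zero_comp]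

lemma omg_le_of_mono (S : ShortComplex C) (hS : S.ShortExact) :
    omg η.T S.X₁ ≤ omg η.T S.X₂ := by
  have : Mono S.f := hS.mono_f
  refine csInf_le_csInf (omgSet_bddBelow η S.X₁) (omgSet_nonempty η S.X₂) ?_
  intro i hi
  exact ⟨hi.1, sub_mem_perp S.f hi.2⟩

lemma omg_le_max (S : ShortComplex C) (hS : S.ShortExact) :
    omg η.T S.X₂ ≤ max (omg η.T S.X₁) (omg η.T S.X₃) := by
  set c := max (omg η.T S.X₁) (omg η.T S.X₃) with hc
  rw [omg_eq, Real.sInf_le_iff (omgSet_bddBelow η S.X₂) (omgSet_nonempty η S.X₂)]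
  intro ε hε
  rcases le_or_gt 1 (c + ε / 2) with h1 | h1
  · refine ⟨1, one_mem_omgSet η S.X₂, ?_⟩
    calc (1:ℝ) ≤ c + ε / 2 := h1
    _ < c + ε := by linarith
  · refine ⟨c + ε / 2, ?_, by linarith⟩
    have hcL : omg η.T S.X₁ ≤ c := le_max_left _ _
    have hcN : omg η.T S.X₃ ≤ c := le_max_right _ _
    have hL : (c + ε / 2) ∈ omgSet η S.X₁ :=
      mem_omgSet_of_lt η (by linarith) h1.le
    have hN : (c + ε / 2) ∈ omgSet η S.X₃ :=
      mem_omgSet_of_lt η (by linarith) h1.le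
    exact ⟨hL.1, ext_mem_perp S hS hL.2 hN.2⟩

end OmgProof

/-- `Ω_η` is a weak stability condition on `A`. -/
theorem omg_isWeakStability (η : TorsChain C) :
    IsWeakStability (fun M : C => omg η.T M) := by
  refine ⟨fun X _ => omg_mem_Icc η X, fun X Y e => omg_iso η X Y e, ?_⟩
  intro S hS _ _ _
  have h1 := omg_le_of_mono η S hS
  have h2 := omg_le_max η S hS
  rcases le_total (omg η.T S.X₁) (omg η.T S.X₃) with h | h
  · exact Or.inl ⟨h1, h2.trans_eq (max_eq_right h)⟩
  · exact Or.inr ⟨h.trans h1, h2.trans_eq (max_eq_left h)⟩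
end

section
/- Let A be an abelian category, η = (T_i) a chain of torsion classes that is quasi-Noetherian, and (a,b) ⊆ [0,1] an interval. Then the union ∪_{r ∈ (a,b)} T_r is a torsion class in A, with torsionfree class ∩_{r ∈ (a,b)} T_r^⊥. -/
open CategoryTheory CategoryTheory.Limits

universe v u

variable {C : Type u} [Category.{v} C] [Abelian C]

/-- For a quasi-Noetherian chain of torsion classes and an interval `(a,b) ⊆ [0,1]`,
`(⋃_{r ∈ (a,b)} T_r, ⋂_{r ∈ (a,b)} T_r^⊥)` is a torsion pair. -/
theorem union_isTorsionPair (η : TorsChain C) (hη : η.QuasiNoetherian)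
    (a b : ℝ) (ha : 0 ≤ a) (hab : a < b) (hb : b ≤ 1) :
    IsTorsionPair (⋃ r ∈ Set.Ioo a b, η.T r) (⋂ r ∈ Set.Ioo a b, Perp (η.T r)) := by
  obtain ⟨s, hs, hst⟩ := hη a b ha hab hb
  have hsIcc : s ∈ Set.Icc (0:ℝ) 1 := ⟨ha.trans hs.1.le, hs.2.le.trans hb⟩
  constructor
  · intro X hX Y hY f
    simp only [Set.mem_iUnion] at hX
    obtain ⟨r, hr, hXr⟩ := hX
    have hYr : Y ∈ Perp (η.T r) := by
      simp only [Set.mem_iInter] at hY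
      exact hY r hr
    exact hYr X hXr f
  · intro M
    refine ⟨(η.t s M : C), cokernel (η.t s M).arrow, (η.t s M).arrow,
      cokernel.π _, cokernel.condition _, ?_, ?_, ?_⟩
    · exact Set.mem_iUnion.2 ⟨s, Set.mem_iUnion.2 ⟨hs, η.t_mem s hsIcc M⟩⟩
    · simp only [Set.mem_iInter]
      intro r hr X hX f
      have hrIcc : r ∈ Set.Icc (0:ℝ) 1 := ⟨ha.trans hr.1.le, hr.2.le.trans hb⟩
      have hBs : cokernel (η.t s M).arrow ∈ Perp (η.T s) := η.t_quot s hsIcc M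
      have hsB : (η.t s (cokernel (η.t s M).arrow)).arrow = 0 :=
        hBs _ (η.t_mem s hsIcc _) _
      have hrB : (η.t r (cokernel (η.t s M).arrow)).arrow = 0 := by
        rw [← Subobject.ofLE_arrow (hst r hr (cokernel (η.t s M).arrow)), hsB, comp_zero]
      have hf0 : f ≫ cokernel.π (η.t r (cokernel (η.t s M).arrow)).arrow = 0 :=
        η.t_quot r hrIcc _ X hX _
      have hlift := Abelian.monoLift_comp (η.t r (cokernel (η.t s M).arrow)).arrow f hf0
      have hz : IsZero (((η.t r (cokernel (η.t s M).arrow)) : C)) := by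
        rw [IsZero.iff_id_eq_zero, ← cancel_mono (η.t r (cokernel (η.t s M).arrow)).arrow]
        simp [hrB]
      rw [← hlift,
        hz.eq_of_tgt (Abelian.monoLift (η.t r (cokernel (η.t s M).arrow)).arrow f hf0) 0,
        zero_comp]
    · exact { exact := ShortComplex.exact_cokernel _ }
end

section
/- Let A be an abelian category, η = (T_i) a chain of torsion classes that is weakly-Artinian, and (a,b) ⊆ [0,1] an interval. Then the intersection ∩_{r ∈ (a,b)} T_r is a torsion class in A, with torsionfree class ∪_{r ∈ (a,b)} T_r^⊥. -/
open CategoryTheory CategoryTheory.Limits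

universe v u

variable {C : Type u} [Category.{v} C] [Abelian C]

/-- Any subobject lying in the torsion class `T i` is contained in the torsion subobject. -/
lemma le_t_of_mem (η : TorsChain C) {i : ℝ} (hi : i ∈ Set.Icc (0:ℝ) 1) {M : C}
    (N : Subobject M) (hN : (N : C) ∈ η.T i) : N ≤ η.t i M := by
  have hz : N.arrow ≫ cokernel.π (η.t i M).arrow = 0 :=
    η.t_quot i hi M _ hN _
  exact Subobject.le_of_comm (Abelian.monoLift _ _ hz) (Abelian.monoLift_comp _ _ hz)

/-- For a weakly-Artinian chain of torsion classes and an interval `(a,b) ⊆ [0,1]`,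
`(⋂_{r ∈ (a,b)} T_r, ⋃_{r ∈ (a,b)} T_r^⊥)` is a torsion pair. -/
theorem inter_isTorsionPair (η : TorsChain C) (hη : η.WeaklyArtinian)
    (a b : ℝ) (ha : 0 ≤ a) (hab : a < b) (hb : b ≤ 1) :
    IsTorsionPair (⋂ r ∈ Set.Ioo a b, η.T r) (⋃ r ∈ Set.Ioo a b, Perp (η.T r)) := by
  constructor
  · intro X hX Y hY f
    obtain ⟨_, ⟨r, rfl⟩, _, ⟨hr, rfl⟩, hYr⟩ := hY
    exact hYr X (Set.mem_iInter₂.1 hX r hr) f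
  · intro X
    obtain ⟨s, hs, hmin⟩ := hη a b ha hab hb
    have hsIcc : s ∈ Set.Icc (0:ℝ) 1 := ⟨ha.trans hs.1.le, hs.2.le.trans hb⟩
    refine ⟨(η.t s X : C), cokernel (η.t s X).arrow, (η.t s X).arrow,
      cokernel.π _, cokernel.condition _, ?_, ?_, ?_⟩
    · refine Set.mem_iInter₂.2 fun r hr => ?_
      have hrIcc : r ∈ Set.Icc (0:ℝ) 1 := ⟨ha.trans hr.1.le, hr.2.le.trans hb⟩
      rcases le_total r s with h | h
      · exact η.antitone hrIcc.1 h hsIcc.2 (η.t_mem s hsIcc X)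
      · have h1 : η.t r X ≤ η.t s X :=
          le_t_of_mem η hsIcc _ (η.antitone hsIcc.1 h hrIcc.2 (η.t_mem r hrIcc X))
        have h2 : η.t s X = η.t r X := le_antisymm (hmin r hr X) h1
        rw [h2]
        exact η.t_mem r hrIcc X
    · exact Set.mem_iUnion₂.2 ⟨s, hs, η.t_quot s hsIcc X⟩
    · refine ShortComplex.ShortExact.mk' ?_ inferInstance inferInstance
      exact ShortComplex.exact_of_g_is_cokernel _ (cokernelIsCokernel _)
end

section
/- Let φ be a quasi-Noetherian, weakly-Artinian weak stability condition on an abelian category A. Then for every nonzero object M, ℧(η⁺_φ)(M) ≤ φ(M) ≤ Ω(η⁻_φ)(M), where η⁺_φ(s) = {X : φ(N) ≥ s for all nonzero quotients N of X} ∪ {0}, η⁻_φ(s) = {X : φ(N) > s for all nonzero quotients N of X} ∪ {0}, ℧_η(M) = sup{i : M ∈ T_i}, and Ω_η(M) = inf{i : M ∈ T_i^⊥}. -/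
open CategoryTheory CategoryTheory.Limits

universe v u

variable {C : Type u} [Category.{v} C] [Abelian C]

section Aux

lemma exists_step_aux (φ : C → ℝ) (hiso : ∀ X Y : C, (X ≅ Y) → φ X = φ Y)
    (hss : SeesawWeak φ) {i : ℝ} {M : C} (A : Subobject M)
    (hA0 : ¬ IsZero (A : C)) (hAi : i < φ (A : C)) (hAnot : ((A : C) : C) ∉ Tgt φ i) :
    ∃ B : Subobject M, ∃ h : B < A, ¬ IsZero (B : C) ∧ i < φ (B : C) ∧
      φ (cokernel (Subobject.ofLE B A h.le)) ≤ i := by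
  simp only [Tgt, Set.mem_setOf_eq, not_or, not_forall] at hAnot
  obtain ⟨-, N, g, hepi, hN0, hNle⟩ := hAnot
  push_neg at hNle
  haveI : Epi g := hepi
  set K := kernel g with hK
  set ι : K ⟶ (A : C) := kernel.ι g with hι
  have hses : (ShortComplex.mk ι g (kernel.condition g)).ShortExact := by
    refine ⟨(ShortComplex.mk ι g (kernel.condition g)).exact_of_f_is_kernel ?_⟩
    exact kernelIsKernel g
  have hK0 : ¬ IsZero K := by
    intro h
    have : ι = 0 := h.eq_zero_of_src ι
    haveI : Mono g := Abelian.mono_of_kernel_ι_eq_zero g this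
    haveI : IsIso g := isIso_of_mono_of_epi g
    have := hiso _ _ (asIso g)
    linarith
  have hseesaw := hss _ hses hK0 hA0 hN0
  have hKφ : i < φ K := by
    rcases hseesaw with ⟨h1, h2⟩ | ⟨h1, h2⟩
    · exfalso; dsimp at h1 h2; linarith
    · dsimp at h1 h2; linarith
  haveI : Mono (ι ≫ A.arrow) := mono_comp _ _
  set B : Subobject M := Subobject.mk (ι ≫ A.arrow) with hB
  have hBA : B ≤ A := by
    conv_rhs => rw [← Subobject.mk_arrow A]
    exact Subobject.mk_le_mk_of_comm ι rfl
  have hBarrow : (B : Subobject M).arrow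
      = (Subobject.underlyingIso (ι ≫ A.arrow)).hom ≫ ι ≫ A.arrow := by
    exact (Subobject.underlyingIso_hom_comp_eq_mk (ι ≫ A.arrow)).symm
  have hofLE : Subobject.ofLE B A hBA = (Subobject.underlyingIso (ι ≫ A.arrow)).hom ≫ ι := by
    rw [← cancel_mono A.arrow, Subobject.ofLE_arrow, hBarrow, Category.assoc]
  have hlt : B < A := by
    refine lt_of_le_of_ne hBA (fun he => ?_)
    have hAB : A ≤ B := le_of_eq he.symm
    have : (Subobject.ofLE A B hAB ≫ (Subobject.underlyingIso (ι ≫ A.arrow)).hom) ≫ ι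
        = 𝟙 (A : C) := by
      rw [← cancel_mono A.arrow]
      simp [Category.assoc, ← hBarrow, Subobject.ofLE_arrow]
    have hg0 : g = 0 := by
      calc g = ((Subobject.ofLE A B hAB ≫ (Subobject.underlyingIso (ι ≫ A.arrow)).hom) ≫ ι) ≫ g
          := by rw [this]; simp
      _ = 0 := by rw [Category.assoc, kernel.condition]; simp
    exact hN0 (IsZero.of_epi_eq_zero g hg0)
  have hcokiso : cokernel (Subobject.ofLE B A hlt.le) ≅ N := by
    have e1 : cokernel (Subobject.ofLE B A hlt.le) ≅ cokernel ι := by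
      rw [show Subobject.ofLE B A hlt.le
        = (Subobject.underlyingIso (ι ≫ A.arrow)).hom ≫ ι from hofLE]
      exact cokernelEpiComp (Subobject.underlyingIso (ι ≫ A.arrow)).hom ι
    refine e1.trans ?_
    exact IsColimit.coconePointUniqueUpToIso (cokernelIsCokernel ι) (hses.exact.gIsCokernel)
  refine ⟨B, hlt, fun h => hK0 (h.of_iso (Subobject.underlyingIso (ι ≫ A.arrow)).symm), ?_, ?_⟩
  · rw [hiso _ _ (Subobject.underlyingIso (ι ≫ A.arrow))]; exact hKφ
  · rw [hiso _ _ hcokiso]; exact hNle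

end Aux

/-- For a quasi-Noetherian, weakly-Artinian weak stability condition `φ` and every
nonzero `M`: `℧(η⁺_φ)(M) ≤ φ(M) ≤ Ω(η⁻_φ)(M)`. -/
theorem mho_etaPlus_le_le_omg_etaMinus (φ : C → ℝ) (hφ : IsWeakStability φ)
    (hqn : QuasiNoetherianStab φ) (hwa : WeaklyArtinianStab φ)
    (M : C) (hM : ¬ IsZero M) :
    mho (fun s : ℝ => if s ≤ 0 then Set.univ
      else if 1 ≤ s then {X : C | IsZero X} else Tge φ s) M ≤ φ M ∧
    φ M ≤ omg (fun s : ℝ => if s ≤ 0 then Set.univ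
      else if 1 ≤ s then {X : C | IsZero X} else Tgt φ s) M := by
  obtain ⟨hval, hiso, hss⟩ := hφ
  have hφM := hval M hM
  constructor
  · -- mho ≤ φ M
    apply Real.sSup_le _ hφM.1
    rintro x ⟨⟨hx0, hx1⟩, hxT⟩
    by_cases h0 : x ≤ 0
    · linarith [hφM.1]
    · simp only [if_neg h0] at hxT
      by_cases h1 : (1:ℝ) ≤ x
      · simp only [if_pos h1] at hxT
        exact absurd hxT hM
      · simp only [if_neg h1] at hxT
        rcases hxT with h | h
        · exact absurd h hM
        · exact h M (𝟙 M) inferInstance hM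
  · -- φ M ≤ omg
    have hne : (1:ℝ) ∈ {i : ℝ | i ∈ Set.Icc (0:ℝ) 1 ∧ M ∈ Perp (if i ≤ 0 then Set.univ
        else if 1 ≤ i then {X : C | IsZero X} else Tgt φ i)} := by
      refine ⟨⟨zero_le_one, le_refl 1⟩, ?_⟩
      rw [if_neg (by norm_num : ¬ (1:ℝ) ≤ 0), if_pos (le_refl (1:ℝ))]
      intro X hX f
      exact hX.eq_zero_of_src f
    apply le_csInf ⟨1, hne⟩
    rintro b ⟨⟨hb0, hb1⟩, hbP⟩
    by_cases h0 : b ≤ 0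
    · exfalso
      simp only [if_pos h0] at hbP
      exact hM ((IsZero.iff_id_eq_zero M).mpr (hbP M (Set.mem_univ M) (𝟙 M)))
    · by_cases h1 : (1:ℝ) ≤ b
      · linarith [hφM.2]
      · simp only [if_neg h0, if_neg h1] at hbP
        by_contra hcon
        push_neg at hcon
        -- every nonzero subobject A of M with b < φ A is not in Tgt φ b
        have hnotT : ∀ A : Subobject M, ¬ IsZero (A : C) → ((A : C) : C) ∉ Tgt φ b := by
          intro A hA0 hmem
          have := hbP _ hmem A.arrow
          exact hA0 (IsZero.of_mono_eq_zero A.arrow this)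
        set P : Subobject M → Prop := fun A => ¬ IsZero (A : C) ∧ b < φ (A : C) with hP
        have hstep : ∀ A : Subobject M, P A → ∃ B : Subobject M, ∃ h : B < A,
            P B ∧ φ (cokernel (Subobject.ofLE B A h.le)) ≤ b := by
          rintro A ⟨hA0, hAb⟩
          obtain ⟨B, h, h1, h2, h3⟩ :=
            exists_step_aux φ hiso hss A hA0 hAb (hnotT A hA0)
          exact ⟨B, h, ⟨h1, h2⟩, h3⟩
        choose f hflt hfP hfcok using hstep
        have htop : P (⊤ : Subobject M) := by
          have e : ((⊤ : Subobject M) : C) ≅ M := asIso (Subobject.arrow ⊤)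
          exact ⟨fun h => hM (h.of_iso e.symm), by rw [hiso _ _ e]; exact hcon⟩
        let seq : ℕ → {A : Subobject M // P A} := fun n =>
          Nat.rec ⟨⊤, htop⟩ (fun _ x => ⟨f x.1 x.2, hfP x.1 x.2⟩) n
        have hanti : StrictAnti (fun n => (seq n).1) := by
          apply strictAnti_nat_of_succ_lt
          intro n
          exact hflt (seq n).1 (seq n).2
        obtain ⟨n, hn⟩ := hwa M (fun n => (seq n).1) hanti
        have h1 : b < φ (((seq (n+1)).1 : C)) := (seq (n+1)).2.2
        have h2 : φ (cokernel (Subobject.ofLE ((seq (n+1)).1) ((seq n).1)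
            (hanti (Nat.lt_succ_self n)).le)) ≤ b := hfcok (seq n).1 (seq n).2
        linarith
end
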